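/- arXiv:2011.02931 — 4 statements merged into one kernel-verified Lean document; each statement's English description precedes it below -/
import Mathlib

section
/- Let A be a complex unital Banach algebra and let Λ : A → ℂ be a ℂ-linear functional (not assumed continuous) such that Λ(1) = 1 and Λ(a) ≠ 0 for every invertible element a ∈ A. Then Λ(a²) = Λ(a)² for all a ∈ A. -/
open NormedSpace Metric



private lemma aux_primitive {h : ℂ → ℂ} (hd : Differentiable ℂ h) :
    ∃ g : ℂ → ℂ, g 0 = 0 ∧ ∀ z, HasDerivAt g (h z) z := by
  set c : ℕ → ℂ := fun n => (n.factorial : ℂ)⁻¹ * iteratedDeriv n h 0 with hc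
  have htaylor : ∀ z : ℂ, HasSum (fun n : ℕ => c n * z ^ n) (h z) := by
    intro z
    have := Complex.hasSum_taylorSeries_of_entire hd 0 z
    simpa [hc, smul_eq_mul, sub_zero, mul_comm, mul_assoc, mul_left_comm] using this
  refine ⟨fun z => ∑' n : ℕ, (c n / ((n : ℂ) + 1)) * z ^ (n + 1), by simp, ?_⟩
  intro z₀
  set R : ℝ := ‖z₀‖ + 1 with hR
  have hRpos : 0 < R := by positivity
  have hu : Summable (fun n : ℕ => ‖c n‖ * R ^ n) := by
    have h1 : Summable (fun n : ℕ => ‖c n * (R : ℂ) ^ n‖) :=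
      summable_norm_iff.mpr (htaylor (R : ℂ)).summable
    simpa [norm_mul, norm_pow, Complex.norm_real, abs_of_pos hRpos] using h1
  have hterm : ∀ (n : ℕ) (y : ℂ),
      HasDerivAt (fun z : ℂ => (c n / ((n : ℂ) + 1)) * z ^ (n + 1)) (c n * y ^ n) y := by
    intro n y
    have := (hasDerivAt_pow (n + 1) y).const_mul (c n / ((n : ℂ) + 1))
    refine this.congr_deriv ?_
    have hne : ((n : ℂ) + 1) ≠ 0 := Nat.cast_add_one_ne_zero n
    rw [Nat.add_sub_cancel]; push_cast
    field_simp
  have key := hasDerivAt_tsum_of_isPreconnected hu isOpen_ball (convex_ball (0:ℂ) R).isPreconnected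
      (g := fun n z => (c n / ((n : ℂ) + 1)) * z ^ (n + 1))
      (g' := fun n y => c n * y ^ n)
      (fun n y _ => hterm n y)
      (fun n y hy => by
        have hyR : ‖y‖ ≤ R := le_of_lt (mem_ball_zero_iff.mp hy)
        calc ‖c n * y ^ n‖ = ‖c n‖ * ‖y‖ ^ n := by simp [norm_mul, norm_pow]
          _ ≤ ‖c n‖ * R ^ n := by
              gcongr)
      (mem_ball_self hRpos)
      (by simpa using summable_zero)
      (mem_ball_zero_iff.mpr (by rw [hR]; exact lt_add_one _))
  simpa [(htaylor z₀).tsum_eq] using key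


private lemma aux_log {f : ℂ → ℂ} (hf : Differentiable ℂ f) (hne : ∀ z, f z ≠ 0)
    (h0 : f 0 = 1)
    (hprim : ∃ g : ℂ → ℂ, g 0 = 0 ∧ ∀ z, HasDerivAt g (deriv f z / f z) z) :
    ∃ g : ℂ → ℂ, g 0 = 0 ∧ (∀ z, HasDerivAt g (deriv f z / f z) z) ∧
      ∀ z, f z = Complex.exp (g z) := by
  obtain ⟨g, hg0, hg⟩ := hprim
  refine ⟨g, hg0, hg, ?_⟩
  have hF : ∀ z, HasDerivAt (fun w => f w * Complex.exp (-g w)) 0 z := by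
    intro z
    have h1 : HasDerivAt (fun w => Complex.exp (-g w))
        (Complex.exp (-g z) * (-(deriv f z / f z))) z := ((hg z).neg).cexp
    have h2 := ((hf z).hasDerivAt.mul h1)
    refine h2.congr_deriv ?_
    field_simp [hne z]
    ring
  have hconst : ∀ z, f z * Complex.exp (-g z) = 1 := by
    intro z
    have := is_const_of_deriv_eq_zero (fun w => (hF w).differentiableAt)
      (fun w => (hF w).deriv) z 0
    simpa [h0, hg0] using this
  intro z
  have := hconst z
  have h3 : f z * (Complex.exp (-g z) * Complex.exp (g z)) = Complex.exp (g z) := by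
    rw [← mul_assoc, this, one_mul]
  rwa [← Complex.exp_add, neg_add_cancel, Complex.exp_zero, mul_one] at h3


private lemma aux_bc {g : ℂ → ℂ} (hg : Differentiable ℂ g) (hg0 : g 0 = 0)
    {A B : ℝ} (hA : 0 ≤ A) (hB : 0 ≤ B) (hre : ∀ z, (g z).re ≤ A + B * ‖z‖) :
    ∀ z, ‖g z‖ ≤ 2 * (A + 2 * B * ‖z‖ + 1) := by
  intro z₀
  rcases eq_or_ne z₀ 0 with rfl | hz
  · rw [hg0]; simp only [norm_zero, norm_zero]
    nlinarith [norm_nonneg (0:ℂ)]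
  have hz₀ : 0 < ‖z₀‖ := norm_pos_iff.mpr hz
  set R : ℝ := 2 * ‖z₀‖ with hRdef
  have hRpos : 0 < R := by positivity
  set M : ℝ := A + B * R + 1 with hMdef
  have hM1 : 1 ≤ M := by rw [hMdef]; nlinarith
  have hMpos : 0 < M := by linarith
  have hlt : ∀ w ∈ ball (0 : ℂ) R, (g w).re ≤ M - 1 := by
    intro w hw
    have h1 : ‖w‖ < R := mem_ball_zero_iff.mp hw
    have h2 := hre w
    have : B * ‖w‖ ≤ B * R := by nlinarith [norm_nonneg w]
    simp only [hMdef]; linarith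
  set q : ℂ → ℂ := fun w => ((2 * M : ℝ) : ℂ) - g w with hqdef
  have hqre : ∀ w ∈ ball (0 : ℂ) R, M + 1 ≤ (q w).re := by
    intro w hw
    have := hlt w hw
    simp only [hqdef, Complex.sub_re, Complex.ofReal_re]
    linarith
  have hqne : ∀ w ∈ ball (0 : ℂ) R, q w ≠ 0 := by
    intro w hw hzero
    have := hqre w hw
    rw [hzero] at this
    simp at this
    linarith
  set φ : ℂ → ℂ := fun w => g w / q w with hφdef
  have hφ0 : φ 0 = 0 := by simp [hφdef, hg0]
  have hstrict : ∀ w ∈ ball (0 : ℂ) R, ‖g w‖ < ‖q w‖ := by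
    intro w hw
    have h1 := hlt w hw
    have hsq : ‖g w‖ ^ 2 < ‖q w‖ ^ 2 := by
      rw [Complex.sq_norm, Complex.sq_norm, Complex.normSq_apply, Complex.normSq_apply]
      simp only [hqdef, Complex.sub_re, Complex.sub_im, Complex.ofReal_re, Complex.ofReal_im,
        zero_sub, neg_sq]
      nlinarith
    exact lt_of_pow_lt_pow_left₀ 2 (norm_nonneg _) hsq
  have hmaps : Set.MapsTo φ (ball (0 : ℂ) R) (ball (φ 0) 1) := by
    intro w hw
    rw [hφ0, mem_ball_zero_iff]
    have hq : 0 < ‖q w‖ := lt_of_le_of_lt (norm_nonneg _) (hstrict w hw)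
    simp only [hφdef, norm_div]
    rw [div_lt_one hq]
    exact hstrict w hw
  have hφdiff : DifferentiableOn ℂ φ (ball (0 : ℂ) R) := by
    apply DifferentiableOn.div
    · exact hg.differentiableOn
    · exact (differentiable_const _).differentiableOn.sub hg.differentiableOn
    · exact hqne
  have hz₀mem : z₀ ∈ ball (0 : ℂ) R := by
    rw [mem_ball_zero_iff]
    rw [hRdef]; linarith
  have hschwarz := Complex.dist_le_div_mul_dist_of_mapsTo_ball hφdiff (hmaps.mono_right ball_subset_closedBall) hz₀mem
  rw [hφ0] at hschwarz
  simp only [dist_zero_right] at hschwarz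
  have hφle : ‖φ z₀‖ ≤ 1 / 2 := by
    have : (1 / R) * ‖z₀‖ = 1 / 2 := by
      rw [hRdef]; field_simp
    calc ‖φ z₀‖ ≤ 1 / R * ‖z₀‖ := hschwarz
      _ = 1 / 2 := this
  -- g z₀ * (1 + φ z₀) = 2M * φ z₀
  have hqz : q z₀ ≠ 0 := hqne z₀ hz₀mem
  have hident : g z₀ * (1 + φ z₀) = ((2 * M : ℝ) : ℂ) * φ z₀ := by
    have hthis : φ z₀ * (((2 * M : ℝ) : ℂ) - g z₀) = g z₀ := div_mul_cancel₀ _ hqz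
    linear_combination -hthis
  have hlow : (1 : ℝ) / 2 ≤ ‖1 + φ z₀‖ := by
    have := norm_sub_norm_le (1 : ℂ) (-(φ z₀))
    simp only [norm_one, norm_neg, sub_neg_eq_add] at this
    linarith
  have := congrArg norm hident
  rw [norm_mul, norm_mul] at this
  have h2M : ‖((2 * M : ℝ) : ℂ)‖ = 2 * M := by
    rw [Complex.norm_real, Real.norm_eq_abs, abs_of_pos]; linarith
  rw [h2M] at this
  have hgle : ‖g z₀‖ * (1 / 2) ≤ 2 * M * (1 / 2) := by
    calc ‖g z₀‖ * (1 / 2) ≤ ‖g z₀‖ * ‖1 + φ z₀‖ := by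
          apply mul_le_mul_of_nonneg_left hlow (norm_nonneg _)
      _ = 2 * M * ‖φ z₀‖ := this
      _ ≤ 2 * M * (1 / 2) := by
          apply mul_le_mul_of_nonneg_left hφle
          linarith
  have : ‖g z₀‖ ≤ 2 * M := by linarith
  calc ‖g z₀‖ ≤ 2 * M := this
    _ = 2 * (A + 2 * B * ‖z₀‖ + 1) := by rw [hMdef, hRdef]; ring


section
variable {g : ℂ → ℂ}

private lemma aux_linear (hg : Differentiable ℂ g) (hg0 : g 0 = 0)
    {A B : ℝ} (hA : 0 ≤ A) (hB : 0 ≤ B) (hre : ∀ z, (g z).re ≤ A + B * ‖z‖)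
    (hbound : ∀ z, ‖g z‖ ≤ 2 * (A + 2 * B * ‖z‖ + 1)) :
    ∀ z, g z = deriv g 0 * z := by
  have hd : Differentiable ℂ (deriv g) := by
    have h1 : AnalyticOnNhd ℂ g Set.univ :=
      hg.differentiableOn.analyticOnNhd isOpen_univ
    have h2 := h1.deriv
    intro z
    exact (h2 z (Set.mem_univ z)).differentiableAt
  have hK : ∀ c : ℂ, ‖deriv g c‖ ≤ 2 * A + 12 * B + 2 := by
    intro c
    have h1 : 0 < ‖c‖ + 1 := by positivity
    have h2 : ∀ w ∈ sphere c (‖c‖ + 1), ‖g w‖ ≤ 2 * (A + 2 * B * (2 * ‖c‖ + 1) + 1) := by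
      intro w hw
      have hwc : dist w c = ‖c‖ + 1 := (dist_eq_norm w c).trans (mem_sphere_iff_norm.mp hw)
      have hwn : ‖w‖ ≤ 2 * ‖c‖ + 1 := by
        have := norm_le_norm_add_norm_sub' w c
        have hd' : ‖w - c‖ = ‖c‖ + 1 := by
          rw [← dist_eq_norm]; exact mem_sphere_iff_norm.mp hw ▸ (by rw [dist_eq_norm, mem_sphere_iff_norm.mp hw])
        calc ‖w‖ ≤ ‖c‖ + ‖w - c‖ := by
              have := norm_sub_norm_le w c; linarith [norm_sub_rev w c ▸ this]
          _ = 2 * ‖c‖ + 1 := by rw [hd']; ring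
      calc ‖g w‖ ≤ 2 * (A + 2 * B * ‖w‖ + 1) := hbound w
        _ ≤ 2 * (A + 2 * B * (2 * ‖c‖ + 1) + 1) := by nlinarith
    have h3 := Complex.norm_deriv_le_of_forall_mem_sphere_norm_le h1
      hg.diffContOnCl h2
    calc ‖deriv g c‖ ≤ 2 * (A + 2 * B * (2 * ‖c‖ + 1) + 1) / (‖c‖ + 1) := h3
      _ ≤ 2 * A + 12 * B + 2 := by
          rw [div_le_iff₀ h1]
          nlinarith [norm_nonneg c]
  have hconstd : ∀ z, deriv g z = deriv g 0 := by
    intro z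
    apply hd.apply_eq_apply_of_bounded
    rw [isBounded_iff_forall_norm_le]
    exact ⟨2 * A + 12 * B + 2, by rintro x ⟨c, rfl⟩; exact hK c⟩
  intro z
  have hG : ∀ w, HasDerivAt (fun v => g v - deriv g 0 * v) 0 w := by
    intro w
    have h1 := (hg w).hasDerivAt
    have h2 : HasDerivAt (fun v : ℂ => deriv g 0 * v) (deriv g 0) w := by
      simpa using (hasDerivAt_id w).const_mul (deriv g 0)
    have := h1.sub h2
    rwa [hconstd w, sub_self] at this
  have := is_const_of_deriv_eq_zero (fun w => (hG w).differentiableAt)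
    (fun w => (hG w).deriv) z 0
  simp only [hg0, mul_zero, sub_zero] at this
  linear_combination this
end

private lemma aux_key {f : ℂ → ℂ} (hf : Differentiable ℂ f) (hne : ∀ z, f z ≠ 0)
    (h0 : f 0 = 1) (hd0 : deriv f 0 = 0) {C B : ℝ} (hC : 1 ≤ C) (hB : 0 ≤ B)
    (hbound : ∀ z, ‖f z‖ ≤ C * Real.exp (B * ‖z‖)) : ∀ z, f z = 1 := by
  have hderiv : Differentiable ℂ (deriv f) := by
    have h1 : AnalyticOnNhd ℂ f Set.univ := hf.differentiableOn.analyticOnNhd isOpen_univ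
    exact fun z => ((h1.deriv) z (Set.mem_univ z)).differentiableAt
  have hq : Differentiable ℂ (fun z => deriv f z / f z) := hderiv.div hf hne
  obtain ⟨g, hg0, hgd, hfg⟩ := aux_log hf hne h0 (aux_primitive hq)
  have hgdiff : Differentiable ℂ g := fun z => (hgd z).differentiableAt
  have hA : (0:ℝ) ≤ Real.log C := Real.log_nonneg hC
  have hre : ∀ z, (g z).re ≤ Real.log C + B * ‖z‖ := by
    intro z
    have h1 : Real.exp ((g z).re) = ‖f z‖ := by
      rw [hfg z, Complex.norm_exp]
    have h2 : ‖f z‖ ≤ C * Real.exp (B * ‖z‖) := hbound z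
    have h3 : Real.exp ((g z).re) ≤ Real.exp (Real.log C + B * ‖z‖) := by
      rw [h1, Real.exp_add, Real.exp_log (by linarith)]
      exact h2
    exact (Real.exp_le_exp).mp h3
  have hlin := aux_linear hgdiff hg0 hA hB hre (aux_bc hgdiff hg0 hA hB hre)
  have hdg0 : deriv g 0 = 0 := by
    have := (hgd 0).deriv
    rw [this, hd0, zero_div]
  intro z
  rw [hfg z, hlin z, hdg0, zero_mul, Complex.exp_zero]

/-- If `A` is a complex unital Banach algebra and `Λ : A → ℂ` is a linear functional
(not assumed continuous) with `Λ 1 = 1` that is non-zero on every invertible element,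
then `Λ (a²) = (Λ a)²` for every `a ∈ A`. -/
theorem gkz_square {A : Type*} [NormedRing A] [NormedAlgebra ℂ A] [CompleteSpace A]
    (Λ : A →ₗ[ℂ] ℂ) (h1 : Λ 1 = 1) (hinv : ∀ a : A, IsUnit a → Λ a ≠ 0) :
    ∀ a : A, Λ (a ^ 2) = (Λ a) ^ 2 := by
  have hspec : ∀ x : A, Λ x ∈ spectrum ℂ x := by
    intro x
    rw [spectrum.mem_iff]
    intro hu
    refine hinv _ hu ?_
    rw [map_sub, Algebra.algebraMap_eq_smul_one, map_smul, h1, smul_eq_mul, mul_one, sub_self]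
  have hnorm : ∀ x : A, ‖Λ x‖ ≤ ‖(1:A)‖ * ‖x‖ := fun x => by
    have := spectrum.norm_le_norm_mul_of_mem (hspec x)
    linarith [this, mul_comm ‖x‖ ‖(1:A)‖ ▸ this]
  set Λ' : A →L[ℂ] ℂ := Λ.mkContinuous ‖(1:A)‖ hnorm with hΛ'def
  have hΛ'app : ∀ x, Λ' x = Λ x := fun x => rfl
  have hexpnorm : ∀ x : A, ‖exp x‖ ≤ (‖(1:A)‖ + 1) * Real.exp ‖x‖ := by
    intro x
    rw [exp_eq_tsum ℂ]
    have hsum : Summable fun n : ℕ => ‖(n.factorial : ℂ)⁻¹ • x ^ n‖ :=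
      norm_expSeries_summable' x
    refine (norm_tsum_le_tsum_norm hsum).trans ?_
    have hsum2 : Summable fun n : ℕ => (‖(1:A)‖ + 1) * (‖x‖ ^ n / n.factorial) :=
      (Real.summable_pow_div_factorial ‖x‖).mul_left _
    have hterm : ∀ n : ℕ, ‖(n.factorial : ℂ)⁻¹ • x ^ n‖ ≤ (‖(1:A)‖ + 1) * (‖x‖ ^ n / n.factorial) := by
      intro n
      rw [norm_smul]
      have hfac : ‖((n.factorial : ℂ))⁻¹‖ = (n.factorial : ℝ)⁻¹ := by
        rw [norm_inv, Complex.norm_natCast]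
      rw [hfac]
      have hfacpos : (0:ℝ) < n.factorial := by exact_mod_cast n.factorial_pos
      rcases Nat.eq_zero_or_pos n with rfl | hn
      · simp [Nat.factorial]
      · have hx : ‖x ^ n‖ ≤ ‖x‖ ^ n := norm_pow_le' x hn
        have h1A : (1:ℝ) ≤ ‖(1:A)‖ + 1 := by linarith [norm_nonneg (1:A)]
        rw [div_eq_mul_inv]
        calc (n.factorial : ℝ)⁻¹ * ‖x ^ n‖ ≤ (n.factorial : ℝ)⁻¹ * ‖x‖ ^ n := by
              gcongr
          _ = 1 * (‖x‖ ^ n * (n.factorial : ℝ)⁻¹) := by ring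
          _ ≤ (‖(1:A)‖ + 1) * (‖x‖ ^ n * (n.factorial : ℝ)⁻¹) := by
              gcongr
              try positivity
    refine (Summable.tsum_le_tsum hterm hsum hsum2).trans ?_
    rw [tsum_mul_left]
    have : ∑' n : ℕ, (‖x‖ ^ n / n.factorial) = Real.exp ‖x‖ := by
      rw [Real.exp_eq_exp_ℝ, exp_eq_tsum_div]
    rw [this]
  -- main reduction
  suffices H : ∀ b : A, Λ b = 0 → Λ (b * b) = 0 by
    intro a
    have hΛb : Λ (a - Λ a • 1) = 0 := by
      rw [map_sub, map_smul, h1, smul_eq_mul, mul_one, sub_self]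
    have hexpand : a * a = (a - Λ a • 1) * (a - Λ a • 1) + Λ a • (a - Λ a • 1)
        + Λ a • (a - Λ a • 1) + (Λ a * Λ a) • (1:A) := by
      simp only [sub_mul, mul_sub, smul_mul_assoc, mul_smul_comm, one_mul, mul_one,
        smul_sub, smul_smul]
      try abel
    have hΛaa : Λ (a * a) = Λ a * Λ a := by
      rw [hexpand]
      simp only [map_add, map_smul]
      rw [hΛb, H _ hΛb, h1]
      simp
    rw [pow_two, hΛaa, pow_two]
  intro b hΛb
  set f : ℂ → ℂ := fun z => Λ' (exp (z • b)) with hfdef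
  have hfd : ∀ z, HasDerivAt f (Λ' (b * exp (z • b))) z := fun z =>
    Λ'.hasFDerivAt.comp_hasDerivAt z (hasDerivAt_exp_smul_const' b z)
  have hfdiff : Differentiable ℂ f := fun z => (hfd z).differentiableAt
  have hne : ∀ z, f z ≠ 0 := fun z => by
    rw [hfdef]
    exact hinv _ (isUnit_exp_of_mem_ball (𝕂 := ℂ) ((expSeries_radius_eq_top ℂ A).symm ▸ edist_lt_top _ _))
  have h0 : f 0 = 1 := by
    rw [hfdef]
    simp only [zero_smul, exp_zero]
    rw [hΛ'app, h1]
  have hd0 : deriv f 0 = 0 := by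
    rw [(hfd 0).deriv]
    simp only [zero_smul, exp_zero, mul_one]
    rw [hΛ'app, hΛb]
  set C : ℝ := ‖Λ'‖ * (‖(1:A)‖ + 1) + 1 with hCdef
  have hC1 : 1 ≤ C := by
    have : (0:ℝ) ≤ ‖Λ'‖ * (‖(1:A)‖ + 1) := by positivity
    rw [hCdef]; linarith
  have hbound : ∀ z, ‖f z‖ ≤ C * Real.exp (‖b‖ * ‖z‖) := by
    intro z
    have h1' : ‖f z‖ ≤ ‖Λ'‖ * ‖exp (z • b)‖ := Λ'.le_opNorm _
    have h2' : ‖exp (z • b)‖ ≤ (‖(1:A)‖ + 1) * Real.exp ‖z • b‖ := hexpnorm _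
    have h3' : ‖z • b‖ = ‖b‖ * ‖z‖ := by rw [norm_smul]; ring
    calc ‖f z‖ ≤ ‖Λ'‖ * ((‖(1:A)‖ + 1) * Real.exp ‖z • b‖) := by
          refine h1'.trans ?_
          gcongr
      _ = ‖Λ'‖ * (‖(1:A)‖ + 1) * Real.exp (‖b‖ * ‖z‖) := by rw [h3']; ring
      _ ≤ C * Real.exp (‖b‖ * ‖z‖) := by
          rw [hCdef]
          have := Real.exp_pos (‖b‖ * ‖z‖)
          nlinarith
  have hone := aux_key hfdiff hne h0 hd0 hC1 (norm_nonneg b) hbound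
  have hDzero : ∀ z : ℂ, Λ' (b * exp (z • b)) = 0 := by
    intro z
    have h1' := (hfd z).deriv
    have h2' : deriv f z = 0 := by
      have : f = fun _ => (1:ℂ) := funext hone
      rw [this, deriv_const]
    rw [← h1', h2']
  have hgd2 : HasDerivAt (fun z : ℂ => Λ' (b * exp (z • b)))
      (Λ' (b * (b * exp ((0:ℂ) • b)))) 0 :=
    Λ'.hasFDerivAt.comp_hasDerivAt 0 ((hasDerivAt_exp_smul_const' b 0).const_mul b)
  have heq : (fun z : ℂ => Λ' (b * exp (z • b))) = fun _ => (0:ℂ) := funext hDzero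
  have hfinal := hgd2.deriv
  rw [heq, deriv_const] at hfinal
  rw [zero_smul, exp_zero, mul_one] at hfinal
  rw [← hΛ'app]
  exact hfinal.symm
end

section
/- Let A be a complex unital Banach algebra and let Λ : A → ℂ be a ℂ-linear functional (not assumed continuous) such that Λ(1) = 1 and Λ(a) ≠ 0 for every invertible element a ∈ A. Then Λ(ab + ba) = 2Λ(a)Λ(b) for all a, b ∈ A. -/
open Metric Set Filter NormedSpace


open Metric Set Filter

lemma aux_secondDeriv_zero {g : ℂ → ℂ} (hd : Differentiable ℂ g) {K : ℝ}
    (hK : ∀ R : ℝ, 1 ≤ R → ∀ z : ℂ, ‖z‖ ≤ R → ‖g z‖ ≤ K * R) :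
    deriv (deriv g) 0 = 0 := by
  have hKnn : 0 ≤ K := by
    have := hK 1 le_rfl 0 (by simp)
    have := norm_nonneg (g 0); linarith
  have key : ∀ R : ℝ, 1 ≤ R → ‖deriv (deriv g) 0‖ ≤ 2 * K / R := by
    intro R hR
    have hRpos : (0 : ℝ) < R := lt_of_lt_of_le one_pos hR
    lift R to NNReal using hRpos.le with R' hR'
    have hR'pos : 0 < R' := by exact_mod_cast hRpos
    have hq := hd.hasFPowerSeriesOnBall 0 hR'pos
    set q := cauchyPowerSeries g 0 (R' : ℝ) with hqdef
    have h2 : deriv (deriv g) 0 = iteratedDeriv 2 g 0 := by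
      rw [iteratedDeriv_succ, iteratedDeriv_one]
    have h3 : (Nat.factorial 2 • q 2 fun _ => (1:ℂ)) = iteratedFDeriv ℂ 2 g 0 fun _ => (1:ℂ) :=
      hq.factorial_smul 1 2
    have h4 : ‖deriv (deriv g) 0‖ = 2 * ‖q 2 fun _ => (1:ℂ)‖ := by
      rw [h2, iteratedDeriv_eq_iteratedFDeriv, ← h3]
      simp [Nat.factorial, norm_smul]
    have h5 : ‖q 2 fun _ => (1:ℂ)‖ ≤ ‖q 2‖ := by
      have := (q 2).le_opNorm fun _ => (1:ℂ)
      simpa using this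
    have h6 : ‖q 2‖ ≤ ((2 * Real.pi)⁻¹ * ∫ θ : ℝ in (0)..2 * Real.pi,
        ‖g (circleMap 0 (R':ℝ) θ)‖) * |(R':ℝ)|⁻¹ ^ 2 :=
      norm_cauchyPowerSeries_le g 0 (R' : ℝ) 2
    have hint : (∫ θ : ℝ in (0)..2 * Real.pi, ‖g (circleMap 0 (R':ℝ) θ)‖)
        ≤ 2 * Real.pi * (K * R') := by
      have hcont : Continuous fun θ : ℝ => ‖g (circleMap 0 (R':ℝ) θ)‖ :=
        (hd.continuous.comp (continuous_circleMap 0 _)).norm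
      calc (∫ θ : ℝ in (0)..2 * Real.pi, ‖g (circleMap 0 (R':ℝ) θ)‖)
          ≤ ∫ _ : ℝ in (0)..2 * Real.pi, K * R' := by
            apply intervalIntegral.integral_mono_on Real.two_pi_pos.le
              (hcont.intervalIntegrable _ _) (intervalIntegrable_const)
            intro θ _
            apply hK _ hR
            simp [abs_of_nonneg (show (0:ℝ) ≤ R' from R'.2)]
        _ = 2 * Real.pi * (K * R') := by simp; ring
    have hfinal : ‖deriv (deriv g) 0‖ ≤ 2 * ((((2 * Real.pi)⁻¹ * (2 * Real.pi * (K * R'))))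
        * |(R':ℝ)|⁻¹ ^ 2) := by
      rw [h4]
      have : ‖q 2 fun _ => (1:ℂ)‖ ≤ ((2 * Real.pi)⁻¹ * (2 * Real.pi * (K * R'))) * |(R':ℝ)|⁻¹ ^ 2 := by
        refine (h5.trans h6).trans ?_
        apply mul_le_mul_of_nonneg_right _ (by positivity)
        exact mul_le_mul_of_nonneg_left hint (by positivity)
      linarith
    refine hfinal.trans (le_of_eq ?_)
    rw [abs_of_nonneg (show (0:ℝ) ≤ R' from R'.2)]
    field_simp
  have h0 : Filter.Tendsto (fun n : ℕ => 2 * K / ((n:ℝ) + 1)) atTop (nhds 0) :=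
    Filter.Tendsto.div_atTop tendsto_const_nhds
      (Filter.tendsto_atTop_add_const_right _ 1 tendsto_natCast_atTop_atTop)
  have hle : ‖deriv (deriv g) 0‖ ≤ 0 :=
    ge_of_tendsto' h0 fun n => by
      have : (1:ℝ) ≤ (n:ℝ) + 1 := by simp
      exact key _ this
  simpa using le_antisymm hle (norm_nonneg _)



lemma aux_exists_log {f : ℂ → ℂ} (hd : Differentiable ℂ f) (hnz : ∀ z, f z ≠ 0)
    (h0 : f 0 = 1) :
    ∃ g : ℂ → ℂ, Differentiable ℂ g ∧ g 0 = 0 ∧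
      (∀ z, HasDerivAt g (deriv f z / f z) z) ∧ ∀ z, f z = Complex.exp (g z) := by
  have hdd : Differentiable ℂ (deriv f) := by
    intro z
    exact ((hd.differentiableOn.analyticOnNhd isOpen_univ).deriv z (mem_univ z)).differentiableAt
  set h : ℂ → ℂ := fun z => deriv f z / f z with hh
  have hhd : Differentiable ℂ h := hdd.div hd hnz
  set p := cauchyPowerSeries h 0 (1 : ℝ) with hp
  have hps : HasFPowerSeriesOnBall h p 0 ⊤ := by
    have := hhd.hasFPowerSeriesOnBall 0 (R := 1) one_pos
    simpa using this
  have hradius : p.radius = ⊤ := le_antisymm le_top hps.r_le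
  set c : ℕ → ℂ := fun n => p.coeff n with hc
  have hsum : ∀ z : ℂ, HasSum (fun n => c n * z ^ n) (h z) := by
    intro z
    have hz : z ∈ Metric.eball (0 : ℂ) ⊤ := by simp
    have := hps.hasSum hz
    simp only [zero_add] at this
    convert this using 2 with n
    · rfl
    rw [FormalMultilinearSeries.apply_eq_pow_smul_coeff, smul_eq_mul, mul_comm]
  have hsummable : ∀ r : NNReal, Summable fun n => ‖c n‖ * (r : ℝ) ^ n := by
    intro r
    have : (r : ENNReal) < p.radius := by rw [hradius]; exact ENNReal.coe_lt_top
    have := p.summable_norm_mul_pow this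
    simpa [FormalMultilinearSeries.norm_apply_eq_norm_coef] using this
  set g : ℂ → ℂ := fun z => ∑' n : ℕ, (c n / (n + 1)) * z ^ (n + 1) with hg
  have hgd : ∀ z, HasDerivAt g (h z) z := by
    intro z
    have hzR : ‖z‖ < ‖z‖ + 1 := by linarith
    lift (‖z‖ + 1) to NNReal using (by positivity) with R hR
    have hderiv : HasDerivAt g (∑' n : ℕ, c n * z ^ n) z := by
      apply hasDerivAt_tsum_of_isPreconnected (hsummable R) isOpen_ball
        (convex_ball (0:ℂ) (R:ℝ)).isPreconnected
        (g := fun n z => (c n / (n + 1)) * z ^ (n + 1))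
        (g' := fun n y => c n * y ^ n)
        (u := fun n => ‖c n‖ * (R:ℝ) ^ n) (y₀ := 0)
      · intro n y _
        have h1 : HasDerivAt (fun w : ℂ => w ^ (n + 1)) (((n:ℂ) + 1) * y ^ n) y := by
          simpa using hasDerivAt_pow (n + 1) y
        have h2 := h1.const_mul (c n / ((n:ℂ) + 1))
        have hne : ((n:ℂ) + 1) ≠ 0 := Nat.cast_add_one_ne_zero n
        rw [← mul_assoc, div_mul_cancel₀ _ hne] at h2
        exact h2
      · intro n y hy
        rw [norm_mul, norm_pow]
        apply mul_le_mul_of_nonneg_left _ (norm_nonneg _)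
        apply pow_le_pow_left₀ (norm_nonneg _)
        exact le_of_lt (by simpa [mem_ball, dist_eq_norm] using hy)
      · rw [mem_ball, dist_self]
        exact lt_of_le_of_lt (norm_nonneg z) hzR
      · refine Summable.congr (f := fun _ : ℕ => (0:ℂ)) summable_zero ?_
        intro n; simp
      · simpa [mem_ball, dist_eq_norm] using hzR
    rwa [(hsum z).tsum_eq] at hderiv
  have hgdiff : Differentiable ℂ g := fun z => (hgd z).differentiableAt
  have hg0 : g 0 = 0 := by
    rw [hg]
    convert tsum_zero with n
    simp
  refine ⟨g, hgdiff, hg0, hgd, ?_⟩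
  have hF : ∀ z, f z * Complex.exp (-g z) = 1 := by
    have hFd : Differentiable ℂ fun z => f z * Complex.exp (-g z) :=
      hd.mul ((hgdiff.neg).cexp)
    have hFderiv : ∀ z, deriv (fun z => f z * Complex.exp (-g z)) z = 0 := by
      intro z
      have hder : HasDerivAt (fun z => f z * Complex.exp (-g z))
          (deriv f z * Complex.exp (-g z) +
            f z * (Complex.exp (-g z) * (-(deriv f z / f z)))) z :=
        (hd z).hasDerivAt.mul ((hgd z).neg.cexp)
      rw [hder.deriv]
      have := hnz z
      field_simp
      ring
    have hconst := is_const_of_deriv_eq_zero hFd hFderiv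
    intro z
    rw [hconst z 0, hg0, h0]
    simp
  intro z
  have h2 := hF z
  rw [Complex.exp_neg, ← div_eq_mul_inv,
    div_eq_one_iff_eq (Complex.exp_ne_zero _)] at h2
  exact h2



lemma aux_bc_s2 {g : ℂ → ℂ} (hgd : Differentiable ℂ g) (hg0 : g 0 = 0) {C : ℝ}
    (hre : ∀ z, (g z).re ≤ C * ‖z‖) {R : ℝ} (hR : 1 ≤ R) {z : ℂ} (hz : ‖z‖ ≤ R) :
    ‖g z‖ ≤ 4 * (|C| + 1) * R := by
  have hRpos : (0 : ℝ) < R := lt_of_lt_of_le one_pos hR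
  set M : ℝ := (|C| + 1) * (2 * R) with hM
  have hMpos : 0 < M := by positivity
  have hlt : ∀ y : ℂ, y ∈ ball (0:ℂ) (2*R) → (g y).re < M := by
    intro y hy
    have hy' : ‖y‖ < 2 * R := by simpa [mem_ball, dist_eq_norm] using hy
    have h1 : (g y).re ≤ C * ‖y‖ := hre y
    have h2 : C * ‖y‖ ≤ |C| * ‖y‖ :=
      mul_le_mul_of_nonneg_right (le_abs_self C) (norm_nonneg _)
    have h3 : |C| * ‖y‖ ≤ |C| * (2*R) :=
      mul_le_mul_of_nonneg_left hy'.le (abs_nonneg C)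
    nlinarith [abs_nonneg C]
  set N : ℂ := ((2 * M : ℝ) : ℂ) with hN
  have hden : ∀ y : ℂ, y ∈ ball (0:ℂ) (2*R) → N - g y ≠ 0 := by
    intro y hy hcon
    have : (N - g y).re = 0 := by rw [hcon]; simp
    have hNre : (N : ℂ).re = 2 * M := by simp [hN]
    rw [Complex.sub_re, hNre] at this
    have := hlt y hy
    linarith
  set w : ℂ → ℂ := fun y => g y / (N - g y) with hw
  have hnormlt : ∀ y : ℂ, y ∈ ball (0:ℂ) (2*R) → ‖g y‖ < ‖N - g y‖ := by
    intro y hy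
    have hre' := hlt y hy
    have hsq : ‖g y‖ ^ 2 < ‖N - g y‖ ^ 2 := by
      rw [Complex.sq_norm, Complex.sq_norm]
      simp only [Complex.normSq_apply, Complex.sub_re, Complex.sub_im]
      have hNre : (N : ℂ).re = 2 * M := by simp [hN]
      have hNim : (N : ℂ).im = 0 := by simp [hN]
      rw [hNre, hNim]
      nlinarith
    exact lt_of_pow_lt_pow_left₀ 2 (norm_nonneg _) hsq
  have hmaps : MapsTo w (ball (0:ℂ) (2*R)) (ball (w 0) 1) := by
    have hw0 : w 0 = 0 := by simp [hw, hg0]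
    rw [hw0]
    intro y hy
    rw [mem_ball, dist_zero_right, hw]
    simp only
    rw [norm_div]
    have h2 := hnormlt y hy
    have hpos : 0 < ‖N - g y‖ := lt_of_le_of_lt (norm_nonneg _) h2
    rw [div_lt_one hpos]
    exact h2
  have hdw : DifferentiableOn ℂ w (ball (0:ℂ) (2*R)) := by
    apply DifferentiableOn.div (hgd.differentiableOn)
      (((differentiable_const N).sub hgd).differentiableOn) hden
  have hz' : z ∈ ball (0:ℂ) (2*R) := by
    rw [mem_ball, dist_zero_right]; linarith
  have hschwarz := Complex.dist_le_div_mul_dist_of_mapsTo_ball hdw (hmaps.mono_right ball_subset_closedBall) hz'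
  have hw0 : w 0 = 0 := by simp [hw, hg0]
  rw [hw0, dist_zero_right, dist_zero_right] at hschwarz
  have hwz : ‖w z‖ ≤ 1/2 := by
    refine hschwarz.trans ?_
    rw [div_mul_eq_mul_div, one_mul, div_le_div_iff₀ (by linarith) (by norm_num)]
    linarith
  have hdenz := hden z hz'
  have hgw : g z = N * w z / (1 + w z) := by
    have h1 : w z * (N - g z) = g z := div_mul_cancel₀ _ hdenz
    have h1w : (1 : ℂ) + w z ≠ 0 := by
      intro hcon
      have hwm : w z = -1 := by linear_combination hcon
      rw [hwm] at hwz
      norm_num at hwz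
    field_simp
    ring_nf
    linear_combination (-(1:ℂ)) * h1
  have hden1 : (1:ℝ)/2 ≤ ‖1 + w z‖ := by
    have h := norm_sub_le (1 + w z) (w z)
    have he : (1 + w z) - w z = 1 := by ring
    rw [he] at h
    simp only [norm_one] at h
    linarith
  rw [hgw, norm_div, norm_mul]
  have hNnorm : ‖N‖ = 2 * M := by
    rw [hN, Complex.norm_real, Real.norm_eq_abs, abs_of_nonneg (by linarith)]
  have hbound : ‖N‖ * ‖w z‖ / ‖1 + w z‖ ≤ M / (1/2) := by
    apply div_le_div₀ (by linarith) _ (by norm_num) hden1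
    rw [hNnorm]
    calc 2 * M * ‖w z‖ ≤ 2 * M * (1/2) := by
          apply mul_le_mul_of_nonneg_left hwz (by linarith)
      _ = M := by ring
  refine hbound.trans (le_of_eq ?_)
  rw [hM]; ring

lemma aux_entire {f : ℂ → ℂ} (hd : Differentiable ℂ f) (hnz : ∀ z, f z ≠ 0) {C : ℝ}
    (hb : ∀ z, ‖f z‖ ≤ Real.exp (C * ‖z‖)) (h0 : f 0 = 1) (h1 : deriv f 0 = 0) :
    deriv (deriv f) 0 = 0 := by
  obtain ⟨g, hgdiff, hg0, hgd, hfg⟩ := aux_exists_log hd hnz h0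
  set h : ℂ → ℂ := fun z => deriv f z / f z with hh
  have hdd : Differentiable ℂ (deriv f) := by
    intro z
    exact ((hd.differentiableOn.analyticOnNhd isOpen_univ).deriv z (mem_univ z)).differentiableAt
  have hhd : Differentiable ℂ h := hdd.div hd hnz
  have hre : ∀ z, (g z).re ≤ C * ‖z‖ := by
    intro z
    have hfz : ‖f z‖ = Real.exp ((g z).re) := by
      rw [hfg z, Complex.norm_exp]
    have := hb z
    rw [hfz] at this
    exact Real.exp_le_exp.mp this
  have hK : ∀ R : ℝ, 1 ≤ R → ∀ z : ℂ, ‖z‖ ≤ R → ‖g z‖ ≤ (4 * (|C| + 1)) * R :=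
    fun R hR z hz => aux_bc_s2 hgdiff hg0 hre hR hz
  have hgg : deriv (deriv g) 0 = 0 := aux_secondDeriv_zero hgdiff hK
  have hdg : deriv g = h := funext fun z => (hgd z).deriv
  have h00 : h 0 = 0 := by rw [hh]; simp [h0, h1]
  have hfun : f = fun x => Complex.exp (g x) := funext hfg
  have hderivf : deriv f = fun z => Complex.exp (g z) * h z := by
    funext z
    conv_lhs => rw [hfun]
    exact ((hgd z).cexp).deriv
  have hprod : HasDerivAt (fun z => Complex.exp (g z) * h z)
      ((Complex.exp (g 0) * h 0) * h 0 + Complex.exp (g 0) * deriv h 0) 0 :=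
    HasDerivAt.mul ((hgd 0).cexp) (hhd 0).hasDerivAt
  rw [hderivf, hprod.deriv, h00, hg0]
  simp only [mul_zero, zero_mul, zero_add, Complex.exp_zero, one_mul]
  rw [← hdg]; exact hgg

/-- If `A` is a complex unital Banach algebra and `Λ : A → ℂ` is a linear functional
(not assumed continuous) with `Λ 1 = 1` that is non-zero on every invertible element,
then `Λ (ab + ba) = 2 Λ a Λ b` for all `a b ∈ A`. -/
theorem gkz_anticommutator {A : Type*} [NormedRing A] [NormedAlgebra ℂ A] [CompleteSpace A]
    (Λ : A →ₗ[ℂ] ℂ) (h1 : Λ 1 = 1) (hinv : ∀ a : A, IsUnit a → Λ a ≠ 0) :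
    ∀ a b : A, Λ (a * b + b * a) = 2 * Λ a * Λ b := by
  rcases subsingleton_or_nontrivial A with hs | hs
  · exfalso
    have : (1 : A) = 0 := Subsingleton.elim _ _
    rw [this, map_zero] at h1
    exact one_ne_zero h1.symm
  -- Step 0: Λ is bounded with norm ≤ 1
  have hbound : ∀ x : A, ‖Λ x‖ ≤ ‖x‖ := by
    intro x
    by_contra hcon
    push_neg at hcon
    have hΛx : Λ x ≠ 0 := by
      intro h; rw [h] at hcon; simp at hcon
      exact absurd hcon (not_lt.mpr (norm_nonneg x))
    have hu : ‖(Λ x)⁻¹ • x‖ < 1 := by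
      rw [norm_smul, norm_inv]
      have hpos : 0 < ‖Λ x‖ := norm_pos_iff.mpr hΛx
      rw [inv_mul_lt_iff₀ hpos, mul_one]
      exact hcon
    have hunit : IsUnit (1 - (Λ x)⁻¹ • x) := isUnit_one_sub_of_norm_lt_one hu
    apply hinv _ hunit
    rw [map_sub, map_smul, h1, smul_eq_mul, inv_mul_cancel₀ hΛx, sub_self]
  set Λ' : A →L[ℂ] ℂ := Λ.mkContinuous 1 (fun x => by simpa using hbound x) with hΛ'def
  have hΛ' : ∀ x, Λ' x = Λ x := fun _ => rfl
  -- key quadratic step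
  have key : ∀ a : A, Λ a = 0 → Λ (a * a) = 0 := by
    intro a ha
    set f : ℂ → ℂ := fun z => Λ' (exp (z • a)) with hf
    have hmem : ∀ z : ℂ, z • a ∈ EMetric.ball (0 : A) (expSeries ℂ A).radius := by
      intro z
      rw [NormedSpace.expSeries_radius_eq_top]
      exact edist_lt_top _ _
    have hfd : ∀ z, HasDerivAt f (Λ' (a * exp (z • a))) z := by
      intro z
      exact Λ'.hasFDerivAt.comp_hasDerivAt z
        (hasDerivAt_exp_smul_const_of_mem_ball' a z (hmem z))
    have hd : Differentiable ℂ f := fun z => (hfd z).differentiableAt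
    have hnz : ∀ z, f z ≠ 0 := by
      intro z
      show Λ' (exp (z • a)) ≠ 0
      rw [hΛ']
      exact hinv _ (isUnit_exp_of_mem_ball (𝕂 := ℂ) (hmem z))
    have h0 : f 0 = 1 := by
      rw [hf]
      simp only [zero_smul, NormedSpace.exp_zero, hΛ', h1]
    have hd1 : deriv f 0 = 0 := by
      rw [(hfd 0).deriv, hΛ']
      simp only [zero_smul, NormedSpace.exp_zero, mul_one, ha]
    have hb : ∀ z : ℂ, ‖f z‖ ≤ Real.exp (‖a‖ * ‖z‖) := by
      intro z
      have hsumm := expSeries_summable' (𝕂 := ℂ) (z • a)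
      have hmap : f z = ∑' n : ℕ, Λ' ((n.factorial : ℂ)⁻¹ • (z • a) ^ n) := by
        rw [hf]
        simp only
        rw [exp_eq_tsum (𝕂 := ℂ)]
        exact Λ'.map_tsum hsumm
      have hexpsum : HasSum (fun n : ℕ => ‖z • a‖ ^ n / n.factorial)
          (Real.exp (‖z • a‖)) := by
        have hs := Real.summable_pow_div_factorial ‖z • a‖
        have heq : (fun n : ℕ => ‖z • a‖ ^ n / n.factorial)
            = fun n : ℕ => (n.factorial : ℝ)⁻¹ • ‖z • a‖ ^ n := by
          funext n
          rw [smul_eq_mul]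
          ring
        have hexp : Real.exp ‖z • a‖ = ∑' n : ℕ, (n.factorial : ℝ)⁻¹ • ‖z • a‖ ^ n := by
          rw [Real.exp_eq_exp_ℝ, exp_eq_tsum (𝕂 := ℝ)]
        rw [hexp, heq]
        rw [heq] at hs
        exact hs.hasSum
      have hle : ‖f z‖ ≤ Real.exp ‖z • a‖ := by
        rw [hmap]
        apply tsum_of_norm_bounded hexpsum
        intro n
        rcases Nat.eq_zero_or_pos n with hn | hn
        · subst hn
          simp [hΛ', h1]
        · rw [map_smul, norm_smul, hΛ']
          have h1' : ‖((n.factorial : ℂ))⁻¹‖ = ((n.factorial : ℝ))⁻¹ := by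
            rw [norm_inv]
            simp
          rw [h1']
          have h2' : ‖Λ ((z • a) ^ n)‖ ≤ ‖z • a‖ ^ n :=
            (hbound _).trans (norm_pow_le' _ hn)
          rw [div_eq_inv_mul]
          exact mul_le_mul_of_nonneg_left h2' (by positivity)
      refine hle.trans (le_of_eq ?_)
      rw [norm_smul]
      ring_nf
    have hsecond : deriv (deriv f) 0 = Λ (a * a) := by
      have hderiv1 : deriv f = fun z => Λ' (a * exp (z • a)) :=
        funext fun z => (hfd z).deriv
      set L : A →L[ℂ] ℂ := Λ'.comp (ContinuousLinearMap.mul ℂ A a) with hL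
      have hLa : ∀ x : A, L x = Λ' (a * x) := fun x => rfl
      have h2d : HasDerivAt (fun z : ℂ => Λ' (a * exp (z • a)))
          (L (a * exp ((0:ℂ) • a))) 0 := by
        have := L.hasFDerivAt.comp_hasDerivAt 0
          (hasDerivAt_exp_smul_const_of_mem_ball' a 0 (hmem 0))
        exact this
      rw [hderiv1, h2d.deriv, hLa, hΛ']
      simp only [zero_smul, NormedSpace.exp_zero, mul_one]
    rw [← hsecond]
    exact aux_entire hd hnz hb h0 hd1
  -- squares
  have sq : ∀ a : A, Λ (a * a) = Λ a * Λ a := by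
    intro a
    set α := Λ a with hα
    have hza : Λ (a - α • 1) = 0 := by
      rw [map_sub, map_smul, h1, smul_eq_mul, mul_one, sub_self]
    have hk := key _ hza
    have hexpand : (a - α • (1:A)) * (a - α • 1) =
        a * a - α • a - α • a + (α * α) • (1:A) := by
      rw [sub_mul, mul_sub, mul_sub, smul_mul_smul_comm, one_mul, smul_mul_assoc, one_mul,
        mul_smul_comm, mul_one]
      abel
    rw [hexpand] at hk
    simp only [map_add, map_sub, map_smul, smul_eq_mul, h1, mul_one] at hk
    linear_combination hk
  intro a b
  have hab := sq (a + b)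
  have hexp2 : (a + b) * (a + b) = a * a + (a * b + b * a) + b * b := by
    rw [add_mul, mul_add, mul_add]
    abel
  rw [hexp2, map_add, map_add, map_add, sq a, sq b] at hab
  rw [map_add Λ a b] at hab
  rw [map_add]
  linear_combination hab
end

section
/- Let A be a unital associative algebra over ℂ (not necessarily commutative, with no topology assumed) and let Λ : A → ℂ be a ℂ-linear functional such that Λ(1) = 1 and Λ(a²) = Λ(a)² for all a ∈ A. Then Λ(ab) = Λ(a)Λ(b) for all a, b ∈ A. -/
/-- If `A` is a unital associative algebra over `ℂ` (no topology assumed) and `Λ : A → ℂ`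
is a linear functional with `Λ 1 = 1` satisfying `Λ (a²) = (Λ a)²` for all `a`, then
`Λ` is multiplicative. -/
theorem square_multiplicative {A : Type*} [Ring A] [Algebra ℂ A]
    (Λ : A →ₗ[ℂ] ℂ) (h1 : Λ 1 = 1) (hsq : ∀ a : A, Λ (a ^ 2) = (Λ a) ^ 2) :
    ∀ a b : A, Λ (a * b) = Λ a * Λ b := by
  have jordan : ∀ a b : A, Λ (a * b) + Λ (b * a) = 2 * Λ a * Λ b := by
    intro a b
    have h := hsq (a + b)
    have e : (a + b) ^ 2 = a ^ 2 + (a * b + b * a) + b ^ 2 := by noncomm_ring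
    rw [e, map_add, map_add, map_add, hsq a, hsq b, map_add] at h
    linear_combination h
  have aba : ∀ a b : A, Λ (a * b * a) = Λ a ^ 2 * Λ b := by
    intro a b
    have h1' := jordan a (a * b + b * a)
    have h2' := jordan (a ^ 2) b
    have e1 : a * (a * b + b * a) = a ^ 2 * b + a * b * a := by noncomm_ring
    have e2 : (a * b + b * a) * a = a * b * a + b * a ^ 2 := by noncomm_ring
    rw [e1, e2, map_add, map_add, map_add] at h1'
    rw [hsq a] at h2'
    linear_combination (h1' - h2') / 2 + Λ a * jordan a b
  intro a b
  have hx := hsq (a * b)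
  have hy := hsq (b * a)
  have hj := jordan a b
  have h := hsq (a * b + b * a)
  have e : (a * b + b * a) ^ 2
      = (a * b) ^ 2 + a * (b ^ 2) * a + b * (a ^ 2) * b + (b * a) ^ 2 := by
    noncomm_ring
  rw [e, map_add, map_add, map_add, hx, hy, aba a (b ^ 2), aba b (a ^ 2),
    hsq a, hsq b, map_add] at h
  have key : (Λ (a * b) - Λ a * Λ b) ^ 2 = 0 := by linear_combination h / 2 + Λ (a * b) * hj
  exact sub_eq_zero.mp (pow_eq_zero_iff two_ne_zero |>.mp key)
end

section
/- Let A be a commutative complex unital Banach algebra, M a left A-module, and S a non-empty subset of M satisfying condition (S2). Define s₁ ∼ s₂ iff there exist a₁, a₂ ∈ A with a₁·S ∪ a₂·S ⊆ S and a₁·s₁ = a₂·s₂, let S₀ be an equivalence class of S under ∼, and let M₀ be the A-submodule of M generated by S₀. If Λ : M → ℂ is a ℂ-linear functional (not assumed continuous) with Λ(s) ≠ 0 for all s ∈ S₀, then there exists a character χ₀ on A such that Λ(a·m) = χ₀(a)·Λ(m) for all a ∈ A and m ∈ M₀. -/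
open Polynomial

private lemma mul_msum (a : ℂ) (s : Multiset ℂ) :
    (s.map (fun x => a * x)).sum = a * s.sum := by
  induction s using Multiset.induction_on with
  | empty => simp
  | cons b t ih => rw [Multiset.map_cons, Multiset.sum_cons, Multiset.sum_cons, ih]; ring

/-- Second power sum in terms of first elementary symmetric functions. -/
private lemma multiset_sum_sq (s : Multiset ℂ) :
    s.sum ^ 2 = (s.map (fun z => z ^ 2)).sum + 2 * s.esymm 2 := by
  induction s using Multiset.induction_on with
  | empty => simp [Multiset.esymm, Multiset.powersetCard_zero_right]
  | cons a s ih =>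
    have h1 : (a ::ₘ s).esymm 2 = a * s.sum + s.esymm 2 := by
      simp only [Multiset.esymm, Multiset.powersetCard_cons, Multiset.map_add,
        Multiset.sum_add, Multiset.map_map, Function.comp_def, Multiset.prod_cons]
      rw [add_comm]
      congr 1
      rw [Multiset.powersetCard_one, Multiset.map_map]
      simp only [Function.comp_def, Multiset.prod_singleton]
      exact mul_msum a s
    rw [Multiset.sum_cons, Multiset.map_cons, Multiset.sum_cons, add_sq, ih, h1]
    ring

private lemma nat_two_choose_two (m : ℕ) : 2 * (m + 2).choose 2 = (m + 2) * (m + 1) := by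
  rw [Nat.choose_two_right]
  have h1 : m + 2 - 1 = m + 1 := by omega
  rw [h1]
  rw [Nat.mul_div_cancel']
  have : Even ((m + 1) * (m + 1 + 1)) := Nat.even_mul_succ_self (m + 1)
  rw [(by ring : (m + 2) * (m + 1) = (m + 1) * (m + 1 + 1))]
  exact this.two_dvd

/-- Core Gleason–Kahane–Żelazko step for commutative Banach algebras:
a unital linear functional not vanishing on units preserves squares. -/
private lemma gkz_sq {A : Type*} [NormedCommRing A] [NormedAlgebra ℂ A]
    [CompleteSpace A] (φ : A →+ ℂ)
    (hsm : ∀ (c : ℂ) (a : A), φ (algebraMap ℂ A c * a) = c * φ a)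
    (hone : φ 1 = 1) (hunit : ∀ a : A, IsUnit a → φ a ≠ 0) (x : A) :
    φ (x * x) = φ x * φ x := by
  set Cb : ℝ := ‖x‖ * ‖(1 : A)‖ with hCb
  set K : ℝ := Cb ^ 2 + ‖φ (x * x)‖ with hK
  have key : ∀ m : ℕ, ‖φ x * φ x - φ (x * x)‖ ≤ K / (m + 2) := by
    intro m
    set n : ℕ := m + 2 with hn
    set cf : ℕ → ℂ := fun k => ((n.choose k : ℕ) : ℂ) * φ ((-x) ^ (n - k)) with hcf
    set q : ℂ[X] := ∑ k ∈ Finset.range (n + 1), C (cf k) * X ^ k with hq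
    have hcoeff : ∀ j, q.coeff j = if j ≤ n then cf j else 0 := by
      intro j
      have hcf0 : ∀ i, n < i → cf i = 0 := by
        intro i hi
        simp [hcf, Nat.choose_eq_zero_of_lt hi]
      rw [hq, finset_sum_coeff]
      simp only [coeff_C_mul, coeff_X_pow, mul_ite, mul_one, mul_zero]
      rw [Finset.sum_ite_eq]
      by_cases hjn : j ≤ n
      · simp [Finset.mem_range, Nat.lt_succ_iff, hjn]
      · simp [Finset.mem_range, Nat.lt_succ_iff, hjn]
    have heval : ∀ z : ℂ, q.eval z = φ ((algebraMap ℂ A z - x) ^ n) := by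
      intro z
      have hexp : (algebraMap ℂ A z - x) ^ n
          = ∑ k ∈ Finset.range (n + 1),
              algebraMap ℂ A (z ^ k * ((n.choose k : ℕ) : ℂ)) * (-x) ^ (n - k) := by
        rw [sub_eq_add_neg, add_pow]
        refine Finset.sum_congr rfl fun k _ => ?_
        rw [map_mul, map_pow, map_natCast]
        ring
      rw [hexp, map_sum, hq, eval_finset_sum]
      refine Finset.sum_congr rfl fun k _ => ?_
      rw [hsm, eval_mul, eval_pow, eval_C, eval_X]
      ring
    have hcn : cf n = 1 := by simp [hcf, hone]
    have hdeg : q.natDegree = n := by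
      have hle : q.natDegree ≤ n := by
        apply natDegree_le_iff_coeff_eq_zero.mpr
        intro j hj
        rw [hcoeff]; exact if_neg (by omega)
      have hge : n ≤ q.natDegree := by
        apply le_natDegree_of_ne_zero
        rw [hcoeff, if_pos le_rfl, hcn]
        exact one_ne_zero
      omega
    have hlc : q.leadingCoeff = 1 := by
      rw [leadingCoeff, hdeg, hcoeff, if_pos le_rfl, hcn]
    have hroots : Multiset.card q.roots = q.natDegree :=
      splits_iff_card_roots.mp (IsAlgClosed.splits q)
    have hbound : ∀ z ∈ q.roots, ‖z‖ ≤ Cb := by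
      intro z hz
      have hq0 : q ≠ 0 := by
        intro h0
        rw [h0] at hlc
        simp [leadingCoeff] at hlc
      have hev : q.eval z = 0 := (mem_roots hq0).mp hz
      have hzs : z ∈ spectrum ℂ x := by
        rw [spectrum.mem_iff]
        intro hu
        exact hunit _ (hu.pow n) (by rw [← heval z, hev])
      exact spectrum.norm_le_norm_mul_of_mem hzs
    -- Vieta at degree n-1 and n-2
    have hv1 : q.roots.sum = (n : ℂ) * φ x := by
      have h := Polynomial.coeff_eq_esymm_roots_of_card hroots
        (k := m + 1) (by omega)
      rw [hdeg] at h
      have hd1 : n - (m + 1) = 1 := by omega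
      rw [hd1] at h
      have he1 : q.roots.esymm 1 = q.roots.sum := by
        simp [Multiset.esymm, Multiset.powersetCard_one, Multiset.map_map,
          Function.comp_def]
      rw [he1, hlc, hcoeff, if_pos (by omega : m + 1 ≤ n)] at h
      simp only [hcf] at h
      have hch : ((n.choose (m + 1) : ℕ) : ℂ) = (n : ℂ) := by
        have hc : n.choose (m + 1) = n := by
          rw [hn]; exact Nat.choose_succ_self_right (m + 1)
        rw [hc]
      have hnegx : ((-x) ^ (n - (m + 1))) = -x := by rw [hd1, pow_one]
      rw [hnegx, map_neg, hch] at h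
      linear_combination h
    have hv2 : q.roots.esymm 2 = ((n.choose 2 : ℕ) : ℂ) * φ (x * x) := by
      have h := Polynomial.coeff_eq_esymm_roots_of_card hroots
        (k := m) (by omega)
      rw [hdeg] at h
      have hd2 : n - m = 2 := by omega
      rw [hd2] at h
      rw [hlc, hcoeff, if_pos (by omega : m ≤ n)] at h
      simp only [hcf] at h
      have hch : (n.choose m : ℕ) = n.choose 2 := by
        have := Nat.choose_symm (by omega : 2 ≤ n) (n := n)
        rwa [(by omega : n - 2 = m)] at this
      have hx2 : (-x) ^ (n - m) = x * x := by
        rw [hd2]; ring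
      rw [hx2, hch] at h
      linear_combination -h
    -- power sum of squares
    have hps : (q.roots.map (fun z => z ^ 2)).sum
        = ((n : ℂ) * φ x) ^ 2 - 2 * (((n.choose 2 : ℕ) : ℂ) * φ (x * x)) := by
      have := multiset_sum_sq q.roots
      rw [hv1, hv2] at this
      linear_combination -this
    have hpsb : ‖(q.roots.map (fun z => z ^ 2)).sum‖ ≤ (n : ℝ) * Cb ^ 2 := by
      refine le_trans (norm_multiset_sum_le _) ?_
      have hCb0 : (0:ℝ) ≤ Cb := mul_nonneg (norm_nonneg _) (norm_nonneg _)
      have : ∀ r ∈ (q.roots.map (fun z => z ^ 2)).map norm, r ≤ Cb ^ 2 := by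
        intro r hr
        rw [Multiset.mem_map] at hr
        obtain ⟨w, hw, rfl⟩ := hr
        rw [Multiset.mem_map] at hw
        obtain ⟨z, hz, rfl⟩ := hw
        have := hbound z hz
        calc ‖z ^ 2‖ = ‖z‖ ^ 2 := by rw [norm_pow]
          _ ≤ Cb ^ 2 := by
              exact pow_le_pow_left₀ (norm_nonneg _) this 2
      have hcard : Multiset.card ((q.roots.map (fun z => z ^ 2)).map norm) = n := by
        simp [hroots, hdeg]
      calc ((q.roots.map (fun z => z ^ 2)).map norm).sum
          ≤ Multiset.card ((q.roots.map (fun z => z ^ 2)).map norm) • (Cb ^ 2) :=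
            Multiset.sum_le_card_nsmul _ _ this
        _ = (n : ℝ) * Cb ^ 2 := by rw [hcard, nsmul_eq_mul]
    -- the algebraic identity
    have hch2 : (2 : ℂ) * ((n.choose 2 : ℕ) : ℂ) = (n : ℂ) * ((n : ℂ) - 1) := by
      have := nat_two_choose_two m
      have h2 : ((2 * (m + 2).choose 2 : ℕ) : ℂ) = (((m + 2) * (m + 1) : ℕ) : ℂ) := by
        rw [this]
      push_cast at h2
      rw [hn]; push_cast; linear_combination h2
    have hiden : ((n : ℂ)) ^ 2 * (φ x * φ x - φ (x * x))
        = (q.roots.map (fun z => z ^ 2)).sum - (n : ℂ) * φ (x * x) := by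
      rw [hps]
      linear_combination (φ (x*x)) * hch2
    have hn0 : (0:ℝ) < (n : ℝ) := by positivity
    have hnormid : (n : ℝ) ^ 2 * ‖φ x * φ x - φ (x * x)‖ ≤ (n : ℝ) * K := by
      have h1 : ‖((n : ℂ)) ^ 2 * (φ x * φ x - φ (x * x))‖
          = (n : ℝ) ^ 2 * ‖φ x * φ x - φ (x * x)‖ := by
        rw [norm_mul, norm_pow]
        norm_num
      rw [← h1, hiden]
      refine le_trans (norm_sub_le _ _) ?_
      have h2 : ‖(n : ℂ) * φ (x * x)‖ = (n:ℝ) * ‖φ (x * x)‖ := by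
        rw [norm_mul]; norm_num
      rw [h2, hK]
      have := hpsb
      nlinarith [norm_nonneg (φ (x*x))]
    have : ‖φ x * φ x - φ (x * x)‖ ≤ K / (n : ℝ) := by
      rw [le_div_iff₀ hn0]
      nlinarith [norm_nonneg (φ x * φ x - φ (x * x))]
    convert this using 2
    rw [hn]; push_cast; ring
  -- conclude the difference is zero
  have hK0 : 0 ≤ K := by positivity
  by_contra hne
  have hd0 : 0 < ‖φ x * φ x - φ (x * x)‖ := by
    rw [norm_pos_iff]
    intro h; apply hne; linear_combination -h
  obtain ⟨m, hm⟩ := exists_nat_gt (K / ‖φ x * φ x - φ (x * x)‖)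
  have h1 := key m
  have h2 : K / ‖φ x * φ x - φ (x * x)‖ < (m : ℝ) + 2 := by
    refine lt_trans hm ?_; norm_num
  rw [div_lt_iff₀ hd0] at h2
  have h3 : ((m:ℝ) + 2) > 0 := by positivity
  rw [le_div_iff₀ h3] at h1  -- ‖d‖ ≤ K/(m+2) ↔ ‖d‖*(m+2) ≤ K
  nlinarith

/-- Commutative GKZ: such a functional is multiplicative. -/
private lemma gkz_mul {A : Type*} [NormedCommRing A] [NormedAlgebra ℂ A]
    [CompleteSpace A] (φ : A →+ ℂ)
    (hsm : ∀ (c : ℂ) (a : A), φ (algebraMap ℂ A c * a) = c * φ a)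
    (hone : φ 1 = 1) (hunit : ∀ a : A, IsUnit a → φ a ≠ 0) (a b : A) :
    φ (a * b) = φ a * φ b := by
  have h1 := gkz_sq φ hsm hone hunit (a + b)
  have h2 := gkz_sq φ hsm hone hunit a
  have h3 := gkz_sq φ hsm hone hunit b
  have hexp : (a + b) * (a + b) = a * a + (a * b + (a * b + b * b)) := by ring
  rw [hexp, map_add, map_add, map_add, map_add] at h1
  linear_combination (h1 - h2 - h3) / 2

/-- Let `A` be a commutative complex unital Banach algebra, `M` a left `A`-module and
`S ⊆ M` non-empty satisfying (S2).  Let `S₀` be an equivalence class of `S` under the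
relation `s₁ ∼ s₂ ⇔ ∃ a₁ a₂, a₁ • S ∪ a₂ • S ⊆ S ∧ a₁ • s₁ = a₂ • s₂`, and let `M₀` be
the `A`-submodule generated by `S₀`.  If `Λ : M → ℂ` is a ℂ-linear functional
(not assumed continuous) with `Λ s ≠ 0` for all `s ∈ S₀`, then there is a character
`χ₀` on `A` with `Λ (a • m) = χ₀ a * Λ m` for all `a ∈ A` and `m ∈ M₀`. -/
theorem gkz_module_class {A : Type*} [NormedCommRing A] [NormedAlgebra ℂ A]
    [CompleteSpace A] {M : Type*} [AddCommGroup M] [Module A M]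
    (S : Set M) (hSne : S.Nonempty)
    (hS2 : ∀ a : A, IsUnit a → ∀ s ∈ S, a • s ∈ S)
    (S₀ : Set M)
    (hS₀ : ∃ s₀ ∈ S, S₀ = {s ∈ S | ∃ a₁ a₂ : A,
      (∀ t ∈ S, a₁ • t ∈ S) ∧ (∀ t ∈ S, a₂ • t ∈ S) ∧ a₁ • s = a₂ • s₀})
    (Λ : M → ℂ)
    (hadd : ∀ m n : M, Λ (m + n) = Λ m + Λ n)
    (hsmul : ∀ (c : ℂ) (m : M), Λ ((algebraMap ℂ A c) • m) = c * Λ m)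
    (hne : ∀ s ∈ S₀, Λ s ≠ 0) :
    ∃ χ₀ : A →ₐ[ℂ] ℂ, ∀ a : A, ∀ m ∈ Submodule.span A S₀, Λ (a • m) = χ₀ a * Λ m := by
  obtain ⟨s₀, hs₀S, hS₀eq⟩ := hS₀
  have hzero : Λ 0 = 0 := by
    have h := hadd 0 0
    rw [add_zero] at h
    linear_combination -h
  have hmem_iff : ∀ s, s ∈ S₀ ↔ (s ∈ S ∧ ∃ a₁ a₂ : A,
      (∀ t ∈ S, a₁ • t ∈ S) ∧ (∀ t ∈ S, a₂ • t ∈ S) ∧ a₁ • s = a₂ • s₀) := by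
    intro s; rw [hS₀eq]; exact Set.mem_sep_iff
  have hone_map : ∀ t ∈ S, (1 : A) • t ∈ S := fun t ht => by simpa using ht
  have hs₀mem : s₀ ∈ S₀ :=
    (hmem_iff s₀).2 ⟨hs₀S, 1, 1, hone_map, hone_map, rfl⟩
  -- unit stability of S₀
  have hUnit : ∀ s ∈ S₀, ∀ u : A, IsUnit u → u • s ∈ S₀ := by
    intro s hs u hu
    obtain ⟨hsS, a₁, a₂, h1, h2, heq⟩ := (hmem_iff s).1 hs
    refine (hmem_iff _).2 ⟨hS2 u hu s hsS, a₁, u * a₂, h1, ?_, ?_⟩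
    · intro t ht; rw [mul_smul]; exact hS2 u hu _ (h2 t ht)
    · calc a₁ • (u • s) = u • (a₁ • s) := by
            rw [smul_smul, smul_smul, mul_comm]
        _ = (u * a₂) • s₀ := by rw [heq, smul_smul]
  -- multiplicativity of the local functionals
  have hmuls : ∀ s ∈ S₀, ∀ a b : A,
      Λ ((a * b) • s) * Λ s = Λ (a • s) * Λ (b • s) := by
    intro s hs a b
    have hΛs : Λ s ≠ 0 := hne s hs
    set Φ : A →+ ℂ := AddMonoidHom.mk' (fun a => Λ (a • s) / Λ s)
      (by intro a b
          show Λ ((a + b) • s) / Λ s = Λ (a • s) / Λ s + Λ (b • s) / Λ s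
          rw [add_smul, hadd]; ring) with hΦ
    have hsm : ∀ (c : ℂ) (a : A), Φ (algebraMap ℂ A c * a) = c * Φ a := by
      intro c a
      simp only [hΦ, AddMonoidHom.mk'_apply]
      rw [mul_smul, hsmul]
      ring
    have hone : Φ 1 = 1 := by
      simp only [hΦ, AddMonoidHom.mk'_apply, one_smul]
      exact div_self hΛs
    have hunit : ∀ a : A, IsUnit a → Φ a ≠ 0 := by
      intro a ha
      simp only [hΦ, AddMonoidHom.mk'_apply]
      exact div_ne_zero (hne _ (hUnit s hs a ha)) hΛs
    have h := gkz_mul Φ hsm hone hunit a b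
    simp only [hΦ, AddMonoidHom.mk'_apply] at h
    field_simp at h
    exact mul_right_cancel₀ hΛs (by linear_combination Λ s * h)
  have hΛs₀ : Λ s₀ ≠ 0 := hne s₀ hs₀mem
  -- the candidate character as a bare function
  have key : ∀ s ∈ S₀, ∀ a : A, Λ (a • s) * Λ s₀ = Λ (a • s₀) * Λ s := by
    intro s hs a
    obtain ⟨hsS, a₁, a₂, h1, h2, heq⟩ := (hmem_iff s).1 hs
    have h3 : a₁ • s ∈ S₀ := by
      refine (hmem_iff _).2 ⟨h1 s hsS, 1, a₂, hone_map, h2, ?_⟩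
      rw [one_smul, heq]
    have hΛa1 : Λ (a₁ • s) ≠ 0 := hne _ h3
    have e1 := hmuls s hs a a₁
    have e3 := hmuls s₀ hs₀mem a a₂
    have e2' : Λ ((a * a₁) • s) = Λ ((a * a₂) • s₀) := by
      rw [mul_smul, mul_smul, heq]
    have e4 : Λ (a₂ • s₀) = Λ (a₁ • s) := by rw [← heq]
    have e5 : Λ (a • s) * Λ (a₁ • s) * Λ s₀ = Λ (a • s₀) * Λ (a₁ • s) * Λ s := by
      linear_combination (-(Λ s₀)) * e1 + Λ s * e3 + Λ s * Λ s₀ * e2'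
        + (Λ (a • s₀) * Λ s) * e4
    have e6 : (Λ (a • s) * Λ s₀) * Λ (a₁ • s) = (Λ (a • s₀) * Λ s) * Λ (a₁ • s) := by
      linear_combination e5
    exact mul_right_cancel₀ hΛa1 e6
  -- build the character
  set ψ : A → ℂ := fun a => Λ (a • s₀) / Λ s₀ with hψ
  have hψadd : ∀ a b : A, ψ (a + b) = ψ a + ψ b := by
    intro a b; simp only [hψ]; rw [add_smul, hadd]; ring
  have hψmul : ∀ a b : A, ψ (a * b) = ψ a * ψ b := by
    intro a b
    have h := hmuls s₀ hs₀mem a b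
    simp only [hψ]
    rw [div_mul_div_comm, div_eq_div_iff hΛs₀ (mul_ne_zero hΛs₀ hΛs₀)]
    linear_combination Λ s₀ * h
  have hψone : ψ 1 = 1 := by
    simp only [hψ]; rw [one_smul]; exact div_self hΛs₀
  have hψzero : ψ 0 = 0 := by
    simp only [hψ]; rw [zero_smul, hzero, zero_div]
  have hψc : ∀ c : ℂ, ψ (algebraMap ℂ A c) = c := by
    intro c
    simp only [hψ]
    rw [hsmul]
    field_simp
  have main : ∀ m, m ∈ Submodule.span A S₀ → ∀ a : A, Λ (a • m) = ψ a * Λ m := by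
    intro m hm
    induction hm using Submodule.span_induction with
    | mem s hs =>
      intro a
      have h := key s hs a
      simp only [hψ]
      field_simp
      linear_combination h
    | zero => intro a; rw [smul_zero, hzero, mul_zero]
    | add y z hy hz ihy ihz =>
      intro a; rw [smul_add, hadd, hadd, ihy a, ihz a]; ring
    | smul b y hy ihy =>
      intro a
      rw [smul_smul, ihy (a * b), ihy b, hψmul]
      ring
  exact ⟨{ toFun := ψ, map_one' := hψone, map_mul' := hψmul, map_zero' := hψzero,
           map_add' := hψadd, commutes' := fun c => by simpa using hψc c },
    fun a m hm => main m hm a⟩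
end
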